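/- Let X be a completely regular topological space and let 𝒟 be a network of compact subsets of X closed under finite unions (for every compact K ⊆ X and open U ⊇ K there is D ∈ 𝒟 with K ⊆ D ⊆ U, and the union of any two members of 𝒟 is contained in a member of 𝒟). Let α_𝒟 be the topology on C(X,$) generated by the subbase {𝒪(D) : D ∈ 𝒟}, and let C_{α_𝒟}(X,ℝ) be the set of continuous real-valued functions on X with the topology generated by the subbase {[D,V] : D ∈ 𝒟, V open in ℝ}, where [D,V] := {f : f(D) ⊆ V}. Then the following are equivalent: (1) (C(X,$), α_𝒟) is Fréchet at the point X; (2) (C(X,$), α_𝒟) is Fréchet–Urysohn for finite sets at the point X; (3) C_{α_𝒟}(X,ℝ) is Fréchet–Urysohn for finite sets at every point; (4) C_{α_𝒟}(X,ℝ) is Fréchet at every point; (5) for every open 𝒟-cover 𝒞 of X (a family of open subsets of X such that every D ∈ 𝒟 is contained in some member of 𝒞) there exists a countable subfamily 𝒮 ⊆ 𝒞 such that every D ∈ 𝒟 is contained in all but finitely many members of 𝒮. -/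

import Mathlib

open TopologicalSpace Topology Filter

/-- The topology `α_𝒟` on the hyperspace `C(X,$)` of open sets, generated by the subbase
`{𝒪(D) : D ∈ 𝒟}` where `𝒪(D) = {U open : D ⊆ U}`. -/
def alphaD {X : Type*} [TopologicalSpace X] (D : Set (Set X)) :
    TopologicalSpace (Opens X) :=
  TopologicalSpace.generateFrom
    {S : Set (Opens X) | ∃ d ∈ D, S = {U : Opens X | d ⊆ (U : Set X)}}

/-- The topology `α_𝒟(X,ℝ)` on `C(X,ℝ)`, generated by the subbase of sets
`[D,V] = {f : f(D) ⊆ V}`, `D ∈ 𝒟`, `V` open in `ℝ`. -/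
def alphaDFun {X : Type*} [TopologicalSpace X] (D : Set (Set X)) :
    TopologicalSpace C(X, ℝ) :=
  TopologicalSpace.generateFrom
    {S : Set C(X, ℝ) | ∃ d ∈ D, ∃ V : Set ℝ, IsOpen V ∧
      S = {f : C(X, ℝ) | ∀ x ∈ d, f x ∈ V}}

/-- A topological space (given by a topology `t`) is Fréchet at `y`. -/
def FrechetAt {Y : Type*} (t : TopologicalSpace Y) (y : Y) : Prop :=
  ∀ S : Set Y, y ∈ @closure _ t S →
    ∃ u : ℕ → Y, (∀ n, u n ∈ S) ∧ Filter.Tendsto u Filter.atTop (@nhds _ t y)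

/-- A topological space (given by a topology `t`) is Fréchet–Urysohn for finite sets
at `y`. -/
def FUfinAt {Y : Type*} (t : TopologicalSpace Y) (y : Y) : Prop :=
  ∀ P : Set (Set Y), (∀ p ∈ P, p.Finite) →
    (∀ N ∈ @nhds _ t y, ∃ p ∈ P, p ⊆ N) →
    ∃ u : ℕ → Set Y, (∀ n, u n ∈ P) ∧
      ∀ N ∈ @nhds _ t y, ∀ᶠ n in Filter.atTop, u n ⊆ N

section helpers
variable {X : Type*} [TopologicalSpace X] {D : Set (Set X)}

lemma myEmptyMem (hnet : ∀ K : Set X, IsCompact K → ∀ U : Set X, IsOpen U → K ⊆ U →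
      ∃ d ∈ D, K ⊆ d ∧ d ⊆ U) : ∅ ∈ D := by
  obtain ⟨d, hd, -, hsub⟩ := hnet ∅ isCompact_empty ∅ isOpen_empty subset_rfl
  rwa [Set.subset_empty_iff.mp hsub] at hd

lemma myChain (hunion : ∀ d₁ ∈ D, ∀ d₂ ∈ D, ∃ d ∈ D, d₁ ∪ d₂ ⊆ d)
    {d0 : Set X} (h0 : d0 ∈ D) {e : ℕ → Set X} (he : ∀ k, e k ∈ D) (K : ℕ) :
    ∃ d ∈ D, d0 ⊆ d ∧ ∀ k ≤ K, e k ⊆ d := by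
  induction K with
  | zero =>
    obtain ⟨d, hd, hsub⟩ := hunion d0 h0 (e 0) (he 0)
    exact ⟨d, hd, (Set.subset_union_left).trans hsub, fun k hk => by
      interval_cases k; exact (Set.subset_union_right).trans hsub⟩
  | succ K ih =>
    obtain ⟨d, hd, h1, h2⟩ := ih
    obtain ⟨d', hd', hsub⟩ := hunion d hd (e (K+1)) (he (K+1))
    refine ⟨d', hd', h1.trans ((Set.subset_union_left).trans hsub), fun k hk => ?_⟩
    rcases Nat.lt_or_ge k (K+1) with h | h
    · exact (h2 k (Nat.lt_succ_iff.mp h)).trans ((Set.subset_union_left).trans hsub)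
    · have : k = K + 1 := le_antisymm hk h
      subst this
      exact (Set.subset_union_right).trans hsub

/-- key generated-open induction for the hyperspace topology -/
lemma myGenTop (hnet : ∀ K : Set X, IsCompact K → ∀ U : Set X, IsOpen U → K ⊆ U →
      ∃ d ∈ D, K ⊆ d ∧ d ⊆ U)
    (hunion : ∀ d₁ ∈ D, ∀ d₂ ∈ D, ∃ d ∈ D, d₁ ∪ d₂ ⊆ d) :
    ∀ t : Set (Opens X),
      TopologicalSpace.GenerateOpen
        {S : Set (Opens X) | ∃ d ∈ D, S = {U : Opens X | d ⊆ (U : Set X)}} t →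
      (⊤ : Opens X) ∈ t → ∃ d ∈ D, {U : Opens X | d ⊆ (U : Set X)} ⊆ t := by
  intro t ht
  induction ht with
  | basic s hs =>
    intro _
    obtain ⟨d, hd, rfl⟩ := hs
    exact ⟨d, hd, subset_rfl⟩
  | univ => exact fun _ => ⟨∅, myEmptyMem hnet, fun U _ => trivial⟩
  | inter s₁ s₂ _ _ ih1 ih2 =>
    rintro ⟨m1, m2⟩
    obtain ⟨d1, hd1, hs1⟩ := ih1 m1
    obtain ⟨d2, hd2, hs2⟩ := ih2 m2
    obtain ⟨d, hd, hsub⟩ := hunion d1 hd1 d2 hd2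
    refine ⟨d, hd, fun U hU => ⟨hs1 ?_, hs2 ?_⟩⟩
    · exact ((Set.subset_union_left).trans hsub).trans hU
    · exact ((Set.subset_union_right).trans hsub).trans hU
  | sUnion S _ ih =>
    rintro ⟨s, hsS, htop⟩
    obtain ⟨d, hd, hsub⟩ := ih s hsS htop
    exact ⟨d, hd, hsub.trans (Set.subset_sUnion_of_mem hsS)⟩

lemma myNhdsTop (hnet : ∀ K : Set X, IsCompact K → ∀ U : Set X, IsOpen U → K ⊆ U →
      ∃ d ∈ D, K ⊆ d ∧ d ⊆ U)
    (hunion : ∀ d₁ ∈ D, ∀ d₂ ∈ D, ∃ d ∈ D, d₁ ∪ d₂ ⊆ d) {N : Set (Opens X)} :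
    N ∈ @nhds _ (alphaD D) (⊤ : Opens X) ↔
      ∃ d ∈ D, {U : Opens X | d ⊆ (U : Set X)} ⊆ N := by
  rw [@mem_nhds_iff _ (alphaD D)]
  constructor
  · rintro ⟨t, htN, hto, htop⟩
    obtain ⟨d, hd, hsub⟩ := myGenTop hnet hunion t hto htop
    exact ⟨d, hd, hsub.trans htN⟩
  · rintro ⟨d, hd, hsub⟩
    refine ⟨_, hsub, ?_, by simp⟩
    exact TopologicalSpace.GenerateOpen.basic _ ⟨d, hd, rfl⟩
end helpers
section helpers2
set_option linter.unusedSectionVars false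
variable {X : Type*} [TopologicalSpace X] {D : Set (Set X)}

/-- the basic "uniform on `d` up to `ε`" neighborhoods -/
def Wb (f : C(X, ℝ)) (d : Set X) (ε : ℝ) : Set C(X, ℝ) :=
  {g : C(X, ℝ) | ∀ x ∈ d, |g x - f x| < ε}

lemma myWbNhds (hcpt : ∀ d ∈ D, IsCompact d)
    (hnet : ∀ K : Set X, IsCompact K → ∀ U : Set X, IsOpen U → K ⊆ U →
      ∃ d ∈ D, K ⊆ d ∧ d ⊆ U)
    (f : C(X, ℝ)) {d : Set X} (hd : d ∈ D) {ε : ℝ} (hε : 0 < ε) :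
    Wb f d ε ∈ @nhds _ (alphaDFun D) f := by
  have hdc : IsCompact d := hcpt d hd
  -- cover d by preimages of small balls
  obtain ⟨T, hTd, hTcov⟩ := hdc.elim_nhds_subcover
    (fun t => f ⁻¹' (Metric.ball (f t) (ε/4)))
    (fun x hx => (Metric.isOpen_ball.preimage f.continuous).mem_nhds
      (by simp [Metric.mem_ball]; positivity))
  -- for each t in T choose a network element between K_t and U_t
  have He : ∀ t : X, ∃ ed : Set X, ed ∈ D ∧ (t ∈ T →
      d ∩ f ⁻¹' (Metric.closedBall (f t) (ε/4)) ⊆ ed ∧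
      ed ⊆ f ⁻¹' (Metric.ball (f t) (ε/2))) := by
    intro t
    by_cases ht : t ∈ T
    · obtain ⟨ed, hed, h1, h2⟩ := hnet (d ∩ f ⁻¹' (Metric.closedBall (f t) (ε/4)))
        (hdc.inter_right (Metric.isClosed_closedBall.preimage f.continuous))
        (f ⁻¹' (Metric.ball (f t) (ε/2)))
        (Metric.isOpen_ball.preimage f.continuous)
        (by
          rintro x ⟨-, hx⟩
          simp only [Set.mem_preimage, Metric.mem_closedBall] at hx
          simp only [Set.mem_preimage, Metric.mem_ball]
          linarith)
      exact ⟨ed, hed, fun _ => ⟨h1, h2⟩⟩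
    · exact ⟨∅, myEmptyMem hnet, fun h => absurd h ht⟩
  choose e he1 he2 using He
  set O : Set C(X, ℝ) :=
    ⋂ t ∈ T, {g : C(X, ℝ) | ∀ x ∈ e t, g x ∈ Metric.ball (f t) (ε/2)} with hO
  rw [@mem_nhds_iff _ (alphaDFun D)]
  refine ⟨O, ?_, ?_, ?_⟩
  · -- O ⊆ Wb f d ε
    intro g hg x hx
    have := hTcov hx
    simp only [Set.mem_iUnion] at this
    obtain ⟨t, htT, hxt⟩ := this
    have hxK : x ∈ d ∩ f ⁻¹' (Metric.closedBall (f t) (ε/4)) :=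
      ⟨hx, by simp only [Set.mem_preimage, Metric.mem_closedBall]
              exact le_of_lt (by simpa [Metric.mem_ball, dist_comm] using hxt)⟩
    have hxe : x ∈ e t := (he2 t htT).1 hxK
    simp only [hO, Set.mem_iInter] at hg
    have h1 : dist (g x) (f t) < ε/2 := by
      have := hg t htT x hxe
      simpa [Metric.mem_ball] using this
    have h2 : dist (f x) (f t) < ε/4 := by
      simpa [Metric.mem_ball] using hxt
    have : dist (g x) (f x) < ε := by
      calc dist (g x) (f x) ≤ dist (g x) (f t) + dist (f x) (f t) := dist_triangle_right _ _ _
        _ < ε/2 + ε/4 := by linarith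
        _ ≤ ε := by linarith
    simpa [Real.dist_eq] using this
  · -- O is open
    refine @Set.Finite.isOpen_biInter _ _ (alphaDFun D) _ _ T.finite_toSet (fun t ht => ?_)
    exact TopologicalSpace.GenerateOpen.basic _
      ⟨e t, he1 t, Metric.ball (f t) (ε/2), Metric.isOpen_ball, rfl⟩
  · -- f ∈ O
    simp only [hO, Set.mem_iInter]
    intro t htT x hxe
    exact (he2 t htT).2 hxe

lemma myGenFun (hcpt : ∀ d ∈ D, IsCompact d)
    (hnet : ∀ K : Set X, IsCompact K → ∀ U : Set X, IsOpen U → K ⊆ U →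
      ∃ d ∈ D, K ⊆ d ∧ d ⊆ U)
    (hunion : ∀ d₁ ∈ D, ∀ d₂ ∈ D, ∃ d ∈ D, d₁ ∪ d₂ ⊆ d) (f : C(X, ℝ)) :
    ∀ t : Set C(X, ℝ),
      TopologicalSpace.GenerateOpen
        {S : Set C(X, ℝ) | ∃ d ∈ D, ∃ V : Set ℝ, IsOpen V ∧
          S = {f : C(X, ℝ) | ∀ x ∈ d, f x ∈ V}} t →
      f ∈ t → ∃ d ∈ D, ∃ ε > 0, Wb f d ε ⊆ t := by
  intro t ht
  induction ht with
  | basic s hs =>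
    intro hf
    obtain ⟨d, hd, V, hV, rfl⟩ := hs
    have himg : f '' d ⊆ V := by rintro - ⟨x, hx, rfl⟩; exact hf x hx
    obtain ⟨δ, hδ, hth⟩ := ((hcpt d hd).image f.continuous).exists_thickening_subset_open hV himg
    refine ⟨d, hd, δ, hδ, fun g hg x hx => ?_⟩
    apply hth
    rw [Metric.mem_thickening_iff]
    exact ⟨f x, ⟨x, hx, rfl⟩, by simpa [Real.dist_eq] using hg x hx⟩
  | univ => exact fun _ => ⟨∅, myEmptyMem hnet, 1, one_pos, fun g _ => trivial⟩
  | inter s₁ s₂ _ _ ih1 ih2 =>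
    rintro ⟨m1, m2⟩
    obtain ⟨d1, hd1, ε1, hε1, hs1⟩ := ih1 m1
    obtain ⟨d2, hd2, ε2, hε2, hs2⟩ := ih2 m2
    obtain ⟨d, hd, hsub⟩ := hunion d1 hd1 d2 hd2
    refine ⟨d, hd, min ε1 ε2, lt_min hε1 hε2, fun g hg => ⟨hs1 ?_, hs2 ?_⟩⟩
    · exact fun x hx => lt_of_lt_of_le
        (hg x (((Set.subset_union_left).trans hsub) hx)) (min_le_left _ _)
    · exact fun x hx => lt_of_lt_of_le
        (hg x (((Set.subset_union_right).trans hsub) hx)) (min_le_right _ _)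
  | sUnion S _ ih =>
    rintro ⟨s, hsS, hfs⟩
    obtain ⟨d, hd, ε, hε, hsub⟩ := ih s hsS hfs
    exact ⟨d, hd, ε, hε, hsub.trans (Set.subset_sUnion_of_mem hsS)⟩

lemma myNhdsFun (hcpt : ∀ d ∈ D, IsCompact d)
    (hnet : ∀ K : Set X, IsCompact K → ∀ U : Set X, IsOpen U → K ⊆ U →
      ∃ d ∈ D, K ⊆ d ∧ d ⊆ U)
    (hunion : ∀ d₁ ∈ D, ∀ d₂ ∈ D, ∃ d ∈ D, d₁ ∪ d₂ ⊆ d) (f : C(X, ℝ))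
    {N : Set C(X, ℝ)} :
    N ∈ @nhds _ (alphaDFun D) f ↔ ∃ d ∈ D, ∃ ε > 0, Wb f d ε ⊆ N := by
  constructor
  · intro hN
    rw [@mem_nhds_iff _ (alphaDFun D)] at hN
    obtain ⟨t, htN, hto, hft⟩ := hN
    obtain ⟨d, hd, ε, hε, hsub⟩ := myGenFun hcpt hnet hunion f t hto hft
    exact ⟨d, hd, ε, hε, hsub.trans htN⟩
  · rintro ⟨d, hd, ε, hε, hsub⟩
    exact Filter.mem_of_superset (myWbNhds hcpt hnet f hd hε) hsub
end helpers2
section urysohn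
open unitInterval in
lemma myUrysohn {X : Type*} [TopologicalSpace X] [CompletelyRegularSpace X]
    {K U : Set X} (hK : IsCompact K) (hU : IsOpen U) (hKU : K ⊆ U) :
    ∃ g : C(X, ℝ), (∀ x ∈ K, g x = 1) ∧ (∀ x ∉ U, g x = 0) := by
  have He : ∀ x : X, ∃ fx : X → I, (x ∈ K →
      Continuous fx ∧ fx x = 0 ∧ Set.EqOn fx 1 Uᶜ) := by
    intro x
    by_cases hx : x ∈ K
    · obtain ⟨fx, hc, h0, h1⟩ := CompletelyRegularSpace.completely_regular x Uᶜ
        hU.isClosed_compl (fun h => h (hKU hx))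
      exact ⟨fx, fun _ => ⟨hc, h0, h1⟩⟩
    · exact ⟨fun _ => 0, fun h => absurd h hx⟩
  choose F hF using He
  obtain ⟨T, hTK, hTcov⟩ := hK.elim_nhds_subcover
    (fun t => {y : X | (F t y : ℝ) < 1/2})
    (fun x hx => by
      have hc : Continuous fun y => (F x y : ℝ) :=
        continuous_subtype_val.comp (hF x hx).1
      refine (IsOpen.mem_nhds ?_ ?_)
      · exact isOpen_lt hc continuous_const
      · simp [(hF x hx).2.1])
  refine ⟨⟨fun y => min 1 (∑ t ∈ T, 2 * (1 - (F t y : ℝ))), ?_⟩, ?_, ?_⟩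
  · refine continuous_const.min (continuous_finset_sum T (fun t htT => ?_))
    exact continuous_const.mul (continuous_const.sub
      (continuous_subtype_val.comp (hF t (hTK t htT)).1))
  · intro y hy
    have := hTcov hy
    simp only [Set.mem_iUnion] at this
    obtain ⟨t, htT, hyt⟩ := this
    have hsum : (1 : ℝ) < ∑ t ∈ T, 2 * (1 - (F t y : ℝ)) := by
      have hterm : (1 : ℝ) < 2 * (1 - (F t y : ℝ)) := by
        have : (F t y : ℝ) < 1/2 := hyt
        linarith
    
      calc (1:ℝ) < 2 * (1 - (F t y : ℝ)) := hterm
        _ ≤ ∑ t ∈ T, 2 * (1 - (F t y : ℝ)) :=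
          Finset.single_le_sum (fun s _ => by
            show (0:ℝ) ≤ 2 * (1 - (F s y : ℝ))
            have h1 : (F s y : ℝ) ≤ 1 := (F s y).2.2
            linarith) htT
    simp [ContinuousMap.coe_mk, min_eq_left, le_of_lt hsum]
  · intro y hy
    have hz : ∀ t ∈ T, 2 * (1 - (F t y : ℝ)) = 0 := by
      intro t htT
      have : F t y = 1 := (hF t (hTK t htT)).2.2 hy
      rw [this]
      norm_num
    simp only [ContinuousMap.coe_mk]
    rw [Finset.sum_congr rfl hz]
    simp
end urysohn


/-- For a completely regular space `X` and a network `𝒟` of compact subsets of `X` closed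
under finite unions, the following are equivalent: `(C(X,$), α_𝒟)` is Fréchet at the
whole space `X`; it is Fréchet–Urysohn for finite sets at `X`; `C_{α_𝒟}(X,ℝ)` is
Fréchet–Urysohn for finite sets (at every point); `C_{α_𝒟}(X,ℝ)` is Fréchet (at every
point); for every open `𝒟`-cover `𝒞` of `X` there is a countable subfamily (a sequence
of members of `𝒞`) such that every `D ∈ 𝒟` is contained in all but finitely many of its
members. -/
theorem frechet_tfae {X : Type*} [TopologicalSpace X] [CompletelyRegularSpace X]
    (D : Set (Set X))
    (hcpt : ∀ d ∈ D, IsCompact d)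
    (hnet : ∀ K : Set X, IsCompact K → ∀ U : Set X, IsOpen U → K ⊆ U →
      ∃ d ∈ D, K ⊆ d ∧ d ⊆ U)
    (hunion : ∀ d₁ ∈ D, ∀ d₂ ∈ D, ∃ d ∈ D, d₁ ∪ d₂ ⊆ d) :
    List.TFAE
      [FrechetAt (alphaD D) (⊤ : Opens X),
       FUfinAt (alphaD D) (⊤ : Opens X),
       ∀ f : C(X, ℝ), FUfinAt (alphaDFun D) f,
       ∀ f : C(X, ℝ), FrechetAt (alphaDFun D) f,
       ∀ C : Set (Set X), (∀ c ∈ C, IsOpen c) → (∀ d ∈ D, ∃ c ∈ C, d ⊆ c) →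
         ∃ S : ℕ → Set X, (∀ n, S n ∈ C) ∧
           ∀ d ∈ D, ∀ᶠ n in Filter.atTop, d ⊆ S n] := by
  tfae_have 1 → 5
  | h1 => by
    intro C hCopen hCcov
    set S : Set (Opens X) := {U : Opens X | (U : Set X) ∈ C} with hS
    have hcl : (⊤ : Opens X) ∈ @closure _ (alphaD D) S := by
      rw [@mem_closure_iff_nhds _ (alphaD D)]
      intro N hN
      obtain ⟨d, hd, hsub⟩ := (myNhdsTop hnet hunion).mp hN
      obtain ⟨c, hcC, hdc⟩ := hCcov d hd
      exact ⟨⟨c, hCopen c hcC⟩, hsub hdc, hcC⟩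
    obtain ⟨u, huS, hut⟩ := h1 S hcl
    refine ⟨fun n => (u n : Set X), fun n => huS n, fun d hd => ?_⟩
    have hmem : {U : Opens X | d ⊆ (U : Set X)} ∈ @nhds _ (alphaD D) (⊤ : Opens X) :=
      (myNhdsTop hnet hunion).mpr ⟨d, hd, subset_rfl⟩
    exact hut hmem
  tfae_have 5 → 2
  | h5 => by
    intro P hPfin hPN
    set C : Set (Set X) := {s | ∃ p ∈ P, s = ⋂ U ∈ p, (U : Set X)} with hC
    have hCopen : ∀ c ∈ C, IsOpen c := by
      rintro c ⟨p, hp, rfl⟩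
      exact Set.Finite.isOpen_biInter (hPfin p hp) (fun U _ => U.2)
    have hCcov : ∀ d ∈ D, ∃ c ∈ C, d ⊆ c := by
      intro d hd
      obtain ⟨p, hpP, hpsub⟩ := hPN _ ((myNhdsTop hnet hunion).mpr ⟨d, hd, subset_rfl⟩)
      exact ⟨_, ⟨p, hpP, rfl⟩, Set.subset_iInter₂ (fun U hU => hpsub hU)⟩
    obtain ⟨S, hSC, hSγ⟩ := h5 C hCopen hCcov
    choose p hp1 hp2 using hSC
    refine ⟨p, hp1, fun N hN => ?_⟩
    obtain ⟨d, hd, hsub⟩ := (myNhdsTop hnet hunion).mp hN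
    filter_upwards [hSγ d hd] with n hn
    intro U hU
    apply hsub
    show d ⊆ (U : Set X)
    refine hn.trans ?_
    rw [hp2 n]
    exact Set.biInter_subset_of_mem hU
  tfae_have 2 → 1
  | h2 => by
    intro S hS
    rw [@mem_closure_iff_nhds _ (alphaD D)] at hS
    obtain ⟨u, huP, huN⟩ := h2 ((fun U => ({U} : Set (Opens X))) '' S)
      (by rintro p ⟨U, hU, rfl⟩; exact Set.finite_singleton U)
      (by intro N hN
          obtain ⟨U, hUN, hUS⟩ := hS N hN
          exact ⟨{U}, ⟨U, hUS, rfl⟩, Set.singleton_subset_iff.mpr hUN⟩)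
    choose v hvS hveq using huP
    refine ⟨v, hvS, ?_⟩
    rw [Filter.tendsto_def]
    intro N hN
    have : ∀ᶠ n in Filter.atTop, v n ∈ N := by
      filter_upwards [huN N hN] with n hn
      exact hn ((hveq n) ▸ Set.mem_singleton (v n))
    exact this
  tfae_have 3 → 4
  | h3 => by
    intro f S hS
    rw [@mem_closure_iff_nhds _ (alphaDFun D)] at hS
    obtain ⟨u, huP, huN⟩ := h3 f ((fun g => ({g} : Set C(X, ℝ))) '' S)
      (by rintro p ⟨g, hg, rfl⟩; exact Set.finite_singleton g)
      (by intro N hN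
          obtain ⟨g, hgN, hgS⟩ := hS N hN
          exact ⟨{g}, ⟨g, hgS, rfl⟩, Set.singleton_subset_iff.mpr hgN⟩)
    choose v hvS hveq using huP
    refine ⟨v, hvS, ?_⟩
    rw [Filter.tendsto_def]
    intro N hN
    have : ∀ᶠ n in Filter.atTop, v n ∈ N := by
      filter_upwards [huN N hN] with n hn
      exact hn ((hveq n) ▸ Set.mem_singleton (v n))
    exact this
  tfae_have 4 → 5
  | h4 => by
    intro C hCopen hCcov
    set one : C(X, ℝ) := ContinuousMap.const X 1 with hone
    set S : Set C(X, ℝ) := {g | ∃ c ∈ C, ∀ x ∉ c, g x = 0} with hSdef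
    have hcl : one ∈ @closure _ (alphaDFun D) S := by
      rw [@mem_closure_iff_nhds _ (alphaDFun D)]
      intro N hN
      obtain ⟨d, hd, ε, hε, hsub⟩ := (myNhdsFun hcpt hnet hunion one).mp hN
      obtain ⟨c, hcC, hdc⟩ := hCcov d hd
      obtain ⟨g, hg1, hg0⟩ := myUrysohn (hcpt d hd) (hCopen c hcC) hdc
      refine ⟨g, hsub ?_, ⟨c, hcC, fun x hx => hg0 x hx⟩⟩
      intro x hx
      simp only [hone, ContinuousMap.const_apply, hg1 x hx, sub_self, abs_zero]
      exact hε
    obtain ⟨u, huS, hut⟩ := h4 one S hcl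
    choose c hcC hc0 using huS
    refine ⟨c, hcC, fun d hd => ?_⟩
    have hW : Wb one d (1/2) ∈ @nhds _ (alphaDFun D) one :=
      myWbNhds hcpt hnet one hd (by norm_num)
    filter_upwards [hut hW] with n hn x hx
    by_contra hxc
    have h1 := hc0 n x hxc
    have h2 := hn x hx
    rw [h1] at h2
    simp only [hone, ContinuousMap.const_apply] at h2
    norm_num at h2
  tfae_have 5 → 3
  | h5 => by
    intro f
    by_cases hdom : ∃ dstar ∈ D, ∀ U : Set X, IsOpen U → dstar ⊆ U → ∀ d ∈ D, d ⊆ U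
    · -- Case A: a dominating element, the point has a countable nbhd basis
      obtain ⟨dstar, hds, hdomin⟩ := hdom
      intro P hPfin hPN
      have hWn : ∀ m : ℕ, Wb f dstar (1/((m:ℝ)+1)) ∈ @nhds _ (alphaDFun D) f :=
        fun m => myWbNhds hcpt hnet f hds (by positivity)
      choose p hpP hpsub using fun m => hPN _ (hWn m)
      refine ⟨p, hpP, fun N hN => ?_⟩
      obtain ⟨d, hd, ε, hε, hsub⟩ := (myNhdsFun hcpt hnet hunion f).mp hN
      obtain ⟨m0, hm0⟩ := exists_nat_one_div_lt hε
      filter_upwards [Filter.eventually_ge_atTop m0] with m hm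
      intro g hg
      apply hsub
      have hgd : ∀ y ∈ dstar, |g y - f y| < ε := by
        intro y hy
        calc |g y - f y| < 1/((m:ℝ)+1) := hpsub m hg y hy
          _ ≤ 1/((m0:ℝ)+1) := by
            apply one_div_le_one_div_of_le (by positivity)
            have : (m0:ℝ) ≤ (m:ℝ) := Nat.cast_le.mpr hm
            linarith
          _ < ε := hm0
      have hopen : IsOpen {y | |g y - f y| < ε} :=
        isOpen_lt ((g.continuous.sub f.continuous).abs) continuous_const
      have : d ⊆ {y | |g y - f y| < ε} :=
        hdomin _ hopen (fun y hy => hgd y hy) d hd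
      exact fun x hx => this hx
    · -- Case B
      push_neg at hdom
      set C0 : Set (Set X) := {U | IsOpen U ∧ ∃ d' ∈ D, ¬ d' ⊆ U} with hC0
      have hC0cov : ∀ d ∈ D, ∃ c ∈ C0, d ⊆ c := by
        intro d hd
        obtain ⟨U, hUo, hdU, d', hd', hnd⟩ := hdom d hd
        exact ⟨U, ⟨hUo, d', hd', hnd⟩, hdU⟩
      obtain ⟨V, hVC0, hVγ⟩ := h5 C0 (fun c hc => hc.1) hC0cov
      choose e he1 he2 using fun k => (hVC0 k).2
      intro P hPfin hPN
      set C' : Set (Set X) :=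
        {s | ∃ p ∈ P, ∃ k : ℕ,
          s = V k ∩ ⋂ g ∈ p, {x | |g x - f x| < 1/((k:ℝ)+1)}} with hC'
      have hC'open : ∀ c ∈ C', IsOpen c := by
        rintro c ⟨q, hq, k, rfl⟩
        refine ((hVC0 k).1).inter ?_
        exact Set.Finite.isOpen_biInter (hPfin q hq)
          (fun g _ => isOpen_lt ((g.continuous.sub f.continuous).abs) continuous_const)
      have hC'cov : ∀ d ∈ D, ∃ c ∈ C', d ⊆ c := by
        intro d hd
        obtain ⟨k, hk⟩ := (hVγ d hd).exists
        obtain ⟨q, hqP, hqsub⟩ := hPN _ (myWbNhds hcpt hnet f hd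
          (show (0:ℝ) < 1/((k:ℝ)+1) by positivity))
        refine ⟨_, ⟨q, hqP, k, rfl⟩, Set.subset_inter hk ?_⟩
        exact Set.subset_iInter₂ (fun g hg x hx => hqsub hg x hx)
      obtain ⟨c, hcC', hcγ⟩ := h5 C' hC'open hC'cov
      choose p hpP k hceq using hcC'
      refine ⟨p, hpP, fun N hN => ?_⟩
      obtain ⟨d, hd, ε, hε, hsub⟩ := (myNhdsFun hcpt hnet hunion f).mp hN
      obtain ⟨K, hK⟩ := exists_nat_one_div_lt hε
      obtain ⟨dd, hdd, hd_dd, he_dd⟩ := myChain hunion hd he1 K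
      filter_upwards [hcγ dd hdd] with n hn
      rw [hceq n] at hn
      have hkn : K < k n := by
        by_contra hle
        push_neg at hle
        exact he2 (k n) ((he_dd (k n) hle).trans (hn.trans Set.inter_subset_left))
      intro g hg
      apply hsub
      intro x hx
      have hx2 := (hn.trans Set.inter_subset_right) (hd_dd hx)
      have hgx := (Set.mem_iInter₂.mp hx2) g hg
      calc |g x - f x| < 1/((k n:ℝ)+1) := hgx
        _ ≤ 1/((K:ℝ)+1) := by
          apply one_div_le_one_div_of_le (by positivity)
          have : (K:ℝ) ≤ (k n : ℝ) := Nat.cast_le.mpr (le_of_lt hkn)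
          linarith
        _ < ε := hK
  tfae_finish
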